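/- Let T be a triangulated category with products and let C be a set of 0-cocompact objects of T. Then every object C of C is weak cocompact with respect to any inverse tower whose connecting maps are (C ∪ ΣC)-cophantoms; that is, if Y_0 ← Y_1 ← Y_2 ← ⋯ has all connecting maps ψ_i with T(ψ_i, C') = 0 for all C' in C ∪ ΣC, then T(holim Y_i, C) = 0. -/
import Mathlib


open CategoryTheory CategoryTheory.Limits CategoryTheory.Pretriangulated

universe u

variable {T : Type u} [Category.{u} T] [Preadditive T] [HasZeroObject T]
  [HasShift T ℤ] [∀ n : ℤ, (shiftFunctor T n).Additive] [Pretriangulated T]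
  [HasProducts.{0} T]

/-- Composition `X (i+k) ⟶ X i` of `k` consecutive connecting maps of an inverse
tower. -/
def seqComp (X : ℕ → T) (ξ : ∀ i, X (i + 1) ⟶ X i) (i : ℕ) : ∀ k, X (i + k) ⟶ X i
  | 0 => 𝟙 _
  | k + 1 => ξ (i + k) ≫ seqComp X ξ i k

/-- An object `c` of `T` is 0-cocompact: for every inverse tower `(X_i, ξ_i)` such
that the direct tower `T(X_i, Σc)` is co-Mittag-Leffler and `colim T(X_i, c) = 0`,
every map from a homotopy limit of the tower to `c` vanishes. -/
def ZeroCocompact (c : T) : Prop :=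
  ∀ (X : ℕ → T) (ξ : ∀ i, X (i + 1) ⟶ X i),
    -- the direct tower `T(X_0, Σc) → T(X_1, Σc) → ⋯` is co-Mittag-Leffler
    (∀ i, ∃ N, ∀ k, N ≤ k → ∀ g : X i ⟶ (c⟦(1 : ℤ)⟧ : T),
      (seqComp X ξ i k ≫ g = 0 ↔ seqComp X ξ i N ≫ g = 0)) →
    -- `colim T(X_i, c) = 0`
    (∀ i, ∀ g : X i ⟶ c, ∃ k, seqComp X ξ i k ≫ g = 0) →
    -- then every map `holim X_i ⟶ c` is zero
    ∀ (L : T) (p : L ⟶ ∏ᶜ X) (q : (∏ᶜ X : T) ⟶ L⟦(1 : ℤ)⟧),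
      (Triangle.mk p (𝟙 (∏ᶜ X) - Pi.lift (fun i => Pi.π X (i + 1) ≫ ξ i)) q
        ∈ distTriang T) →
      ∀ f : L ⟶ c, f = 0

/-- objects of a set `C` of 0-cocompact objects are weak cocompact with
respect to any inverse tower whose connecting maps are `(C ∪ ΣC)`-cophantoms. -/
theorem zeroCocompact_weak_cocompact (C : Set T) (hC : ∀ c ∈ C, ZeroCocompact c) :
    ∀ c ∈ C, ∀ (Y : ℕ → T) (ψ : ∀ i, Y (i + 1) ⟶ Y i),
      (∀ i, ∀ c' ∈ C, (∀ g : Y i ⟶ c', ψ i ≫ g = 0) ∧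
        (∀ g : Y i ⟶ (c'⟦(1 : ℤ)⟧ : T), ψ i ≫ g = 0)) →
      ∀ (L : T) (p : L ⟶ ∏ᶜ Y) (q : (∏ᶜ Y : T) ⟶ L⟦(1 : ℤ)⟧),
        (Triangle.mk p (𝟙 (∏ᶜ Y) - Pi.lift (fun i => Pi.π Y (i + 1) ≫ ψ i)) q
          ∈ distTriang T) →
        ∀ f : L ⟶ c, f = 0 := by
  intro c hc Y ψ hφ L p q hT f
  refine hC c hc Y ψ ?_ ?_ L p q hT f
  · intro i
    refine ⟨1, fun k hk g => ?_⟩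
    have h0 : ∀ m : ℕ, seqComp Y ψ i (m + 1) ≫ g = 0 := fun m => by
      rw [seqComp, Category.assoc]
      exact (hφ (i + m) c hc).2 _
    obtain ⟨m, rfl⟩ := Nat.exists_eq_add_of_le hk
    rw [Nat.add_comm 1 m, h0 m, h0 0]
    simp
  · intro i g
    refine ⟨1, ?_⟩
    rw [seqComp, Category.assoc]
    exact (hφ (i + 0) c hc).1 _
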